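/- Under assumptions (A1)–(A6), set c₀ = inf_N J. If every sequence (uₙ) ⊂ N with J(uₙ) → c₀ and ‖J'(uₙ)‖_{X*} → 0 has a subsequence that T-converges to some point of X, then there exists u ∈ N with J'(u) = 0 and J(u) = c₀; in particular the infimum of J over N is achieved by a critical point of J. -/

import Mathlib

open Filter Topology NormedSpace
set_option maxHeartbeats 3000000

lemma my_ekeland {X : Type*} [NormedAddCommGroup X] [CompleteSpace X] {S : Set X}
    (hS : IsClosed S) {f : X → ℝ}
    (hfc : ∀ (u : ℕ → X) (x : X), (∀ k, u k ∈ S) → x ∈ S → Tendsto u atTop (𝓝 x) →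
      Tendsto (fun k => f (u k)) atTop (𝓝 (f x)))
    {m : ℝ} (hm : ∀ x ∈ S, m ≤ f x) {u₀ : X} (hu₀ : u₀ ∈ S) {ε : ℝ} (hε : 0 < ε) :
    ∃ u ∈ S, f u ≤ f u₀ ∧ ∀ w ∈ S, f u ≤ f w + ε * ‖w - u‖ := by
  classical
  set SS : X → Set X := fun p => {w | w ∈ S ∧ f w + ε * ‖w - p‖ ≤ f p} with hSSdef
  have hmem : ∀ p ∈ S, p ∈ SS p := by
    intro p hp; refine ⟨hp, ?_⟩; simp
  have hne : ∀ p ∈ S, (f '' SS p).Nonempty := fun p hp => ⟨f p, p, hmem p hp, rfl⟩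
  have hbdd : ∀ p : X, BddBelow (f '' SS p) := by
    intro p; refine ⟨m, ?_⟩; rintro y ⟨w, hw, rfl⟩; exact hm w hw.1
  have hch : ∀ (k : ℕ) (p : {x // x ∈ S}), ∃ q : {x // x ∈ S},
      (q : X) ∈ SS (p : X) ∧ f q < sInf (f '' SS (p : X)) + (2:ℝ)⁻¹ ^ k := by
    intro k p
    obtain ⟨y, ⟨q, hq, rfl⟩, hlt⟩ := Real.lt_sInf_add_pos (hne p p.2)
      (by positivity : (0:ℝ) < (2:ℝ)⁻¹ ^ k)
    exact ⟨⟨q, hq.1⟩, hq, hlt⟩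
  choose g hg1 hg2 using hch
  let u : ℕ → {x // x ∈ S} := fun k => Nat.rec ⟨u₀, hu₀⟩ (fun k p => g k p) k
  have hu_succ : ∀ k, u (k+1) = g k (u k) := fun k => rfl
  set v : ℕ → X := fun k => (u k).1 with hvdef
  have hvS : ∀ k, v k ∈ S := fun k => (u k).2
  -- the relation
  have htrans : ∀ p q w : X, f q + ε * ‖q - p‖ ≤ f p → f w + ε * ‖w - q‖ ≤ f q →
      f w + ε * ‖w - p‖ ≤ f p := by
    intro p q w h1 h2
    have h3 : ‖w - p‖ ≤ ‖w - q‖ + ‖q - p‖ := by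
      simpa [sub_add_sub_cancel] using norm_add_le (w - q) (q - p)
    have h4 := mul_le_mul_of_nonneg_left h3 hε.le
    linarith
  have hchain : ∀ k j, k ≤ j → f (v j) + ε * ‖v j - v k‖ ≤ f (v k) := by
    intro k j hkj
    induction j with
    | zero =>
        have : k = 0 := Nat.le_zero.mp hkj
        subst this; simp
    | succ j ih =>
        rcases Nat.lt_or_ge k (j+1) with h | h
        · have hkj' : k ≤ j := Nat.lt_succ_iff.mp h
          have h1 := ih hkj'
          have h2 : f (v (j+1)) + ε * ‖v (j+1) - v j‖ ≤ f (v j) := by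
            have := (hg1 j (u j)).2
            simpa [hu_succ, hvdef] using this
          exact htrans (v k) (v j) (v (j+1)) h1 h2
        · have : k = j+1 := le_antisymm hkj h
          subst this; simp
  have hinSS : ∀ k j, k ≤ j → v j ∈ SS (v k) := fun k j h => ⟨hvS j, hchain k j h⟩
  have hsmall : ∀ k j, k + 1 ≤ j → ε * ‖v j - v (k+1)‖ ≤ (2:ℝ)⁻¹ ^ k := by
    intro k j hj
    have h1 := hchain (k+1) j hj
    have h2 : sInf (f '' SS (v k)) ≤ f (v j) := csInf_le (hbdd _) ⟨v j, hinSS k j (by omega), rfl⟩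
    have h3 : f (v (k+1)) < sInf (f '' SS (v k)) + (2:ℝ)⁻¹ ^ k := by
      have := hg2 k (u k); simpa [hu_succ, hvdef] using this
    nlinarith [norm_nonneg (v j - v (k+1))]
  have hcauchy : CauchySeq v := by
    rw [Metric.cauchySeq_iff']
    intro δ hδ
    obtain ⟨N, hN⟩ : ∃ N : ℕ, (2:ℝ)⁻¹ ^ N < ε * δ := by
      obtain ⟨N, hN⟩ := exists_pow_lt_of_lt_one (by positivity : (0:ℝ) < ε * δ)
        (by norm_num : (2:ℝ)⁻¹ < 1)
      exact ⟨N, hN⟩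
    refine ⟨N + 1, fun n hn => ?_⟩
    have := hsmall N n hn
    have h2 : ‖v n - v (N+1)‖ < δ := by
      nlinarith [norm_nonneg (v n - v (N+1))]
    simpa [dist_eq_norm] using h2
  obtain ⟨x, hx⟩ := cauchySeq_tendsto_of_complete hcauchy
  have hxS : x ∈ S := hS.mem_of_tendsto hx (Eventually.of_forall hvS)
  have hfl : Tendsto (fun k => f (v k)) atTop (𝓝 (f x)) := hfc v x hvS hxS hx
  have hrelx : ∀ k, f x + ε * ‖x - v k‖ ≤ f (v k) := by
    intro k
    have hlim : Tendsto (fun j => f (v j) + ε * ‖v j - v k‖) atTop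
        (𝓝 (f x + ε * ‖x - v k‖)) := by
      exact (hfl.add (((hx.sub tendsto_const_nhds).norm).const_mul ε))
    refine le_of_tendsto hlim ?_
    filter_upwards [eventually_ge_atTop k] with j hj using hchain k j hj
  refine ⟨x, hxS, ?_, ?_⟩
  · have := hrelx 0
    have h0 : v 0 = u₀ := rfl
    rw [h0] at this
    nlinarith [norm_nonneg (x - u₀), hε]
  · intro w hw
    by_contra hcon
    push_neg at hcon
    have hrelw : f w + ε * ‖w - x‖ ≤ f x := by nlinarith
    have hrelwk : ∀ k, f w + ε * ‖w - v k‖ ≤ f (v k) :=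
      fun k => htrans (v k) x w (hrelx k) hrelw
    have hsmallw : ∀ k, ε * ‖w - v (k+1)‖ ≤ (2:ℝ)⁻¹ ^ k := by
      intro k
      have h1 := hrelwk (k+1)
      have h2 : sInf (f '' SS (v k)) ≤ f w := csInf_le (hbdd _) ⟨w, ⟨hw, hrelwk k⟩, rfl⟩
      have h3 : f (v (k+1)) < sInf (f '' SS (v k)) + (2:ℝ)⁻¹ ^ k := by
        have := hg2 k (u k); simpa [hu_succ, hvdef] using this
      nlinarith [norm_nonneg (w - v (k+1))]
    have hwx : w = x := by
      have hlim : Tendsto (fun k => ‖w - v (k+1)‖) atTop (𝓝 ‖w - x‖) := by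
        exact ((tendsto_const_nhds.sub (hx.comp (tendsto_add_atTop_nat 1))).norm)
      have h0lim : Tendsto (fun k : ℕ => (2:ℝ)⁻¹ ^ k / ε) atTop (𝓝 0) := by
        have := tendsto_pow_atTop_nhds_zero_of_lt_one (by norm_num : (0:ℝ) ≤ (2:ℝ)⁻¹)
          (by norm_num : (2:ℝ)⁻¹ < 1)
        simpa using this.div_const ε
      have hle : ‖w - x‖ ≤ 0 := by
        refine le_of_tendsto_of_tendsto' hlim h0lim ?_
        intro k
        have := hsmallw k
        rw [le_div_iff₀ hε]
        linarith
      have := norm_nonneg (w - x)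
      have : ‖w - x‖ = 0 := le_antisymm hle (norm_nonneg _)
      exact sub_eq_zero.mp (norm_eq_zero.mp this)
    rw [hwx] at hcon
    simp at hcon


lemma my_wsc {X : Type*} [NormedAddCommGroup X] [NormedSpace ℝ X] [CompleteSpace X]
    (hrefl : Function.Surjective (NormedSpace.inclusionInDoubleDual ℝ X))
    (y : ℕ → X) (R : ℝ) (hy : ∀ k, ‖y k‖ ≤ R) :
    ∃ (φ : ℕ → ℕ) (v : X), StrictMono φ ∧
      ∀ ψ : X →L[ℝ] ℝ, Tendsto (fun k => ψ (y (φ k))) atTop (𝓝 (ψ v)) := by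
  classical
  let ι : X → WeakDual ℝ (StrongDual ℝ X) := fun x => StrongDual.toWeakDual (inclusionInDoubleDual ℝ X x)
  have hι_apply : ∀ (x : X) (ψ : (StrongDual ℝ X)), ι x ψ = ψ x := fun x ψ => rfl
  have hι_norm : ∀ x : X, ‖WeakDual.toStrongDual (ι x)‖ = ‖x‖ := by
    intro x
    have : WeakDual.toStrongDual (ι x) = inclusionInDoubleDual ℝ X x := rfl
    rw [this]
    exact (inclusionInDoubleDualLi ℝ (E := X)).norm_map x
  -- the compact set
  set R' : ℝ := max R 0 with hR'
  have hC : IsCompact (WeakDual.toStrongDual ⁻¹' Metric.closedBall (0 : (StrongDual ℝ X) →L[ℝ] ℝ) R') :=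
    WeakDual.isCompact_closedBall (𝕜 := ℝ) 0 R'
  set C : Set (WeakDual ℝ (StrongDual ℝ X)) :=
    WeakDual.toStrongDual ⁻¹' Metric.closedBall (0 : (StrongDual ℝ X) →L[ℝ] ℝ) R' with hCdef
  have hrange_sub : Set.range (fun k => ι (y k)) ⊆ C := by
    rintro _ ⟨k, rfl⟩
    simp only [hCdef, Set.mem_preimage, Metric.mem_closedBall, dist_zero_right]
    rw [show dist (WeakDual.toStrongDual (ι (y k))) 0 = ‖y k‖ from (dist_zero_right (WeakDual.toStrongDual (ι (y k)))).trans (hι_norm _)]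
    exact (hy k).trans (le_max_left _ _)
  set K : Set (WeakDual ℝ (StrongDual ℝ X)) := closure (Set.range (fun k => ι (y k))) with hKdef
  have hKC : K ⊆ C := closure_minimal hrange_sub hC.isClosed
  have hK : IsCompact K := hC.of_isClosed_subset isClosed_closure hKC
  -- the separable subspace
  set Y : Submodule ℝ X := (Submodule.span ℝ (Set.range y)).topologicalClosure with hYdef
  have hyY : ∀ k, y k ∈ Y :=
    fun k => (Submodule.le_topologicalClosure _) (Submodule.subset_span ⟨k, rfl⟩)
  -- every element of K comes from an element of Y
  have hKY : ∀ F ∈ K, ∃ v, v ∈ Y ∧ ι v = F := by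
    intro F hF
    obtain ⟨x, hx⟩ := hrefl (WeakDual.toStrongDual F)
    have hιx : ι x = F := by
      simp only [ι, hx]
      rfl
    refine ⟨x, ?_, hιx⟩
    by_contra hxY
    obtain ⟨ψ, s, h1, h2⟩ := geometric_hahn_banach_closed_point
      (Y.convex) (by rw [hYdef]; exact Submodule.isClosed_topologicalClosure _) hxY
    have hψY : ∀ v ∈ Y, ψ v = 0 := by
      intro v hv
      by_contra hne
      have hmem : ((s + 1) / ψ v) • v ∈ Y := Y.smul_mem _ hv
      have := h1 _ hmem
      rw [map_smul] at this
      simp only [smul_eq_mul] at this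
      rw [div_mul_cancel₀ _ hne] at this
      linarith
    have hψx : ψ x > 0 := by
      have h0 : (0:X) ∈ Y := Y.zero_mem
      have := h1 0 h0
      simp at this
      linarith
    have hKzero : K ⊆ (fun F : WeakDual ℝ (StrongDual ℝ X) => F ψ) ⁻¹' {0} := by
      refine closure_minimal ?_ (isClosed_singleton.preimage (WeakDual.eval_continuous ψ))
      rintro _ ⟨k, rfl⟩
      simp only [Set.mem_preimage, Set.mem_singleton_iff]
      rw [hι_apply]
      exact hψY _ (hyY k)
    have hFψ : F ψ = 0 := hKzero hF
    have : F ψ = ψ x := by rw [← hιx]; rfl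
    rw [this] at hFψ
    linarith
  -- countable approximating set for Y
  have hYsep : TopologicalSpace.IsSeparable (Y : Set X) := by
    have h1 : (Set.range y).Countable := Set.countable_range y
    have h2 : TopologicalSpace.IsSeparable (Set.range y) := h1.isSeparable
    have h3 := h2.span (R := ℝ)
    rw [hYdef, Submodule.topologicalClosure_coe]
    exact h3.closure
  obtain ⟨c, hc_count, hc_sub⟩ := hYsep
  obtain ⟨e, he⟩ := Set.Countable.exists_eq_range (hc_count.insert 0)
    (Set.insert_nonempty _ _)
  have hc_sub' : (Y : Set X) ⊆ closure (Set.range e) := by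
    rw [← he]
    exact hc_sub.trans (closure_mono (Set.subset_insert _ _))
  -- norming functionals
  have hψs : ∀ n : ℕ, ∃ ψ : (StrongDual ℝ X), ‖ψ‖ ≤ 1 ∧ ψ (e n) = ‖e n‖ := by
    intro n
    rcases eq_or_ne (e n) 0 with h | h
    · exact ⟨0, by simp, by simp [h]⟩
    · obtain ⟨ψ, h1, h2⟩ := exists_dual_vector ℝ (e n) (norm_ne_zero_iff.mpr h)
      exact ⟨ψ, le_of_eq h1, h2⟩
  choose ψs hψs1 hψs2 using hψs
  have hsep : ∀ v ∈ Y, (∀ n, ψs n v = 0) → v = 0 := by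
    intro v hv hzero
    by_contra hne
    have hvpos : 0 < ‖v‖ := norm_pos_iff.mpr hne
    obtain ⟨w, ⟨n, rfl⟩, hwd⟩ := Metric.mem_closure_iff.mp (hc_sub' hv) (‖v‖/3)
      (by positivity)
    rw [dist_eq_norm] at hwd
    have hen : ‖v‖ - ‖v‖/3 ≤ ‖e n‖ := by
      linarith [norm_sub_norm_le v (e n), hwd]
    have hb : ‖ψs n (v - e n)‖ ≤ ‖v - e n‖ := by
      calc ‖ψs n (v - e n)‖ ≤ ‖ψs n‖ * ‖v - e n‖ := (ψs n).le_opNorm _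
        _ ≤ 1 * ‖v - e n‖ := by
            exact mul_le_mul_of_nonneg_right (hψs1 n) (norm_nonneg _)
        _ = ‖v - e n‖ := one_mul _
    have : ψs n (v - e n) = - ‖e n‖ := by
      rw [map_sub, hzero n, hψs2 n]; ring
    rw [this] at hb
    simp only [norm_neg, Real.norm_eq_abs, abs_of_nonneg (norm_nonneg (e n))] at hb
    linarith
  -- metrizability of K
  have hKcomp : CompactSpace K := isCompact_iff_compactSpace.mp hK
  let Φ : K → (ℕ → ℝ) := fun F n => (F : WeakDual ℝ (StrongDual ℝ X)) (ψs n)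
  have hΦcont : Continuous Φ :=
    continuous_pi fun n => (WeakDual.eval_continuous (ψs n)).comp continuous_subtype_val
  have hΦinj : Function.Injective Φ := by
    rintro ⟨F, hF⟩ ⟨G, hG⟩ hFG
    obtain ⟨v, hvY, rfl⟩ := hKY F hF
    obtain ⟨w, hwY, rfl⟩ := hKY G hG
    have heq : ∀ n, ψs n v = ψs n w := by
      intro n
      have := congrFun hFG n
      simpa [Φ, hι_apply] using this
    have : v - w = 0 := by
      refine hsep _ (Y.sub_mem hvY hwY) fun n => ?_
      rw [map_sub, heq n, sub_self]
    have hvw : v = w := sub_eq_zero.mp this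
    subst hvw
    rfl
  have hemb := hΦcont.isClosedEmbedding hΦinj
  have hmetr : TopologicalSpace.MetrizableSpace K := hemb.isEmbedding.metrizableSpace
  -- extract convergent subsequence
  let Ky : ℕ → K := fun k => ⟨ι (y k), subset_closure ⟨k, rfl⟩⟩
  obtain ⟨a, -, φ, hφmono, hconv⟩ := isCompact_univ.tendsto_subseq
    (fun k => Set.mem_univ (Ky k))
  obtain ⟨v, hvY, hva⟩ := hKY (a : WeakDual ℝ (StrongDual ℝ X)) a.2
  refine ⟨φ, v, hφmono, fun ψ => ?_⟩
  have h1 : Tendsto (fun k => ((Ky (φ k) : WeakDual ℝ (StrongDual ℝ X))) ψ) atTop (𝓝 ((a : WeakDual ℝ (StrongDual ℝ X)) ψ)) :=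
    ((WeakDual.eval_continuous ψ).tendsto _).comp ((continuous_subtype_val.tendsto a).comp hconv)
  have h2 : ∀ k, ((Ky (φ k) : WeakDual ℝ (StrongDual ℝ X))) ψ = ψ (y (φ k)) := fun k => rfl
  have h3 : ψ v = (a : WeakDual ℝ (StrongDual ℝ X)) ψ := by rw [← hva]; exact (hι_apply v ψ).symm
  rw [h3]
  simpa [h2] using h1

theorem groundstate_achieved
    {X : Type*} [NormedAddCommGroup X] [NormedSpace ℝ X] [CompleteSpace X]
    -- X is reflexive
    (hrefl : Function.Surjective (NormedSpace.inclusionInDoubleDual ℝ X))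
    -- topological direct sum decomposition X = X⁺ ⊕ X̃, with projection P onto X⁺ along X̃
    (Xp Xt : Submodule ℝ X)
    (hXpcl : IsClosed (Xp : Set X)) (hXtcl : IsClosed (Xt : Set X))
    (P : X →L[ℝ] X)
    (hPm : ∀ x : X, P x ∈ Xp) (hQm : ∀ x : X, x - P x ∈ Xt)
    (hPp : ∀ x ∈ Xp, P x = x) (hPt : ∀ x ∈ Xt, P x = 0)
    -- ‖u‖² = ‖u⁺‖² + ‖ũ‖²
    (hnorm : ∀ x : X, ‖x‖ ^ 2 = ‖P x‖ ^ 2 + ‖x - P x‖ ^ 2)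
    -- u ↦ ‖u‖² is C¹ on X⁺
    (hC1 : ContDiffOn ℝ 1 (fun x : X => ‖x‖ ^ 2) (Xp : Set X))
    -- J, I of class C¹ with J(u) = ½‖u⁺‖² - I(u)
    (J I : X → ℝ) (J' I' : X → X →L[ℝ] ℝ)
    (hJd : ∀ x, HasFDerivAt J (J' x) x) (hJ'c : Continuous J')
    (hId : ∀ x, HasFDerivAt I (I' x) x) (hI'c : Continuous I')
    (hJI : ∀ x : X, J x = (1 / 2) * ‖P x‖ ^ 2 - I x)
    -- (A1)
    (hI0 : I 0 = 0) (hIpos : ∀ x : X, 0 ≤ I x)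
    -- (A2) : T-convergence implies liminf I(uₙ) ≥ I(v)
    (hA2 : ∀ (u : ℕ → X) (v : X),
      Tendsto (fun n => P (u n)) atTop (𝓝 (P v)) →
      (∀ φ : X →L[ℝ] ℝ, Tendsto (fun n => φ (u n - P (u n))) atTop (𝓝 (φ (v - P v)))) →
      ∀ b : ℝ, b < I v → ∀ᶠ n in atTop, b < I (u n))
    -- (A3)
    (hA3 : ∀ (u : ℕ → X) (v : X),
      Tendsto (fun n => P (u n)) atTop (𝓝 (P v)) →
      (∀ φ : X →L[ℝ] ℝ, Tendsto (fun n => φ (u n - P (u n))) atTop (𝓝 (φ (v - P v)))) →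
      Tendsto (fun n => I (u n)) atTop (𝓝 (I v)) →
      Tendsto u atTop (𝓝 v))
    -- (A4)
    (r a : ℝ) (hr : 0 < r)
    (ha_def : a = sInf (J '' {x : X | x ∈ Xp ∧ ‖x‖ = r})) (ha : 0 < a)
    -- (A5) : m̂(u) is the unique nontrivial critical point of J|_{X(u)} in X̂(u), and the
    -- unique global maximum of J on X̂(u)
    (m : X → X)
    (hm_mem : ∀ u ∉ Xt, ∃ t : ℝ, 0 ≤ t ∧ ∃ v ∈ Xt, m u = t • u + v)
    (hm_ne : ∀ u ∉ Xt, m u ≠ 0)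
    (hm_crit : ∀ u ∉ Xt, ∀ z : X, (∃ t : ℝ, ∃ v ∈ Xt, z = t • u + v) → J' (m u) z = 0)
    (hm_unique : ∀ u ∉ Xt, ∀ w : X, (∃ t : ℝ, 0 ≤ t ∧ ∃ v ∈ Xt, w = t • u + v) → w ≠ 0 →
      (∀ z : X, (∃ t : ℝ, ∃ v ∈ Xt, z = t • u + v) → J' w z = 0) → w = m u)
    (hm_max : ∀ u ∉ Xt, ∀ w : X, (∃ t : ℝ, 0 ≤ t ∧ ∃ v ∈ Xt, w = t • u + v) →
      w ≠ m u → J w < J (m u))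
    -- (A6)
    (δ : ℝ) (hδ : 0 < δ) (hm_lb : ∀ u ∉ Xt, δ ≤ ‖P (m u)‖)
    (hm_bdd : ∀ K : Set X, IsCompact K → (∀ x ∈ K, x ∉ Xt) →
      Bornology.IsBounded (m '' K))
    -- (PS)_{c₀}^T condition on the Nehari–Pankov manifold N
    (hPS : ∀ u : ℕ → X,
      (∀ n, (u n) ∈ {u : X | u ∉ Xt ∧ J' u u = 0 ∧ ∀ v ∈ Xt, J' u v = 0}) →
      Tendsto (fun n => J (u n)) atTop
        (𝓝 (sInf (J '' {u : X | u ∉ Xt ∧ J' u u = 0 ∧ ∀ v ∈ Xt, J' u v = 0}))) →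
      Tendsto (fun n => ‖J' (u n)‖) atTop (𝓝 0) →
      ∃ (φ : ℕ → ℕ) (v : X), StrictMono φ ∧
        Tendsto (fun n => P (u (φ n))) atTop (𝓝 (P v)) ∧
        ∀ ψ : X →L[ℝ] ℝ,
          Tendsto (fun n => ψ (u (φ n) - P (u (φ n)))) atTop (𝓝 (ψ (v - P v)))) :
    ∃ u : X, u ∈ {u : X | u ∉ Xt ∧ J' u u = 0 ∧ ∀ v ∈ Xt, J' u v = 0} ∧
      J' u = 0 ∧ J u = sInf (J '' {u : X | u ∉ Xt ∧ J' u u = 0 ∧ ∀ v ∈ Xt, J' u v = 0}) := by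
  classical
  set NN : Set X := {u : X | u ∉ Xt ∧ J' u u = 0 ∧ ∀ v ∈ Xt, J' u v = 0} with hNNdef
  set c₀ : ℝ := sInf (J '' NN) with hc₀def
  -- basic facts
  have hmemXt : ∀ x : X, x ∈ Xt ↔ P x = 0 := by
    intro x
    constructor
    · exact hPt x
    · intro h
      have := hQm x
      rwa [h, sub_zero] at this
  have hPP : ∀ x : X, P (P x) = P x := fun x => hPp _ (hPm x)
  have hPle : ∀ x : X, ‖P x‖ ≤ ‖x‖ := by
    intro x
    nlinarith [hnorm x, norm_nonneg (x - P x), norm_nonneg (P x), norm_nonneg x,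
      sq_nonneg (‖P x‖ - ‖x‖), sq_nonneg (‖P x‖ + ‖x‖)]
  have hJcont : Continuous J := continuous_iff_continuousAt.mpr fun x => (hJd x).continuousAt
  have hJ0 : J 0 = 0 := by
    rw [hJI 0, map_zero]
    simp [hI0]
  have hmN : ∀ u, u ∉ Xt → m u ∈ NN := by
    intro u hu
    have hlb := hm_lb u hu
    have hmuXt : m u ∉ Xt := by
      intro hmem
      rw [(hmemXt _).mp hmem] at hlb
      simp at hlb
      linarith
    refine ⟨hmuXt, ?_, ?_⟩
    · obtain ⟨t, ht, v, hv, heq⟩ := hm_mem u hu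
      exact hm_crit u hu (m u) ⟨t, v, hv, heq⟩
    · intro w hw
      exact hm_crit u hu w ⟨0, w, hw, by simp⟩
  have hNm : ∀ u ∈ NN, m u = u := by
    intro u hu
    obtain ⟨huXt, hJu, hJt⟩ := hu
    refine (hm_unique u huXt u ⟨1, zero_le_one, 0, Xt.zero_mem, by simp⟩ ?_ ?_).symm
    · intro h
      rw [h] at huXt
      exact huXt Xt.zero_mem
    · rintro z ⟨t, w, hw, rfl⟩
      rw [map_add, map_smul]
      rw [hJu, hJt w hw]
      simp
  have hmmax : ∀ u, u ∉ Xt → ∀ w, (∃ t : ℝ, 0 ≤ t ∧ ∃ v ∈ Xt, w = t • u + v) →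
      J w ≤ J (m u) := by
    intro u hu w hw
    rcases eq_or_ne w (m u) with h | h
    · rw [h]
    · exact (hm_max u hu w hw h).le
  have hJposN : ∀ u ∈ NN, 0 < J u := by
    intro u hu
    have hmu := hNm u hu
    have h0 : J 0 < J (m u) := hm_max u hu.1 0 ⟨0, le_refl 0, 0, Xt.zero_mem, by simp⟩
      (Ne.symm (hm_ne u hu.1))
    rw [hmu] at h0
    rw [hJ0] at h0
    exact h0
  have hSne : {x : X | x ∈ Xp ∧ ‖x‖ = r}.Nonempty := by
    rcases Set.eq_empty_or_nonempty {x : X | x ∈ Xp ∧ ‖x‖ = r} with he | hne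
    · exfalso
      rw [he, Set.image_empty, Real.sInf_empty] at ha_def
      linarith
    · exact hne
  have hNne : NN.Nonempty := by
    obtain ⟨x₀, hx₀p, hx₀r⟩ := hSne
    have hx₀Xt : x₀ ∉ Xt := by
      intro hmem
      have h1 := (hmemXt _).mp hmem
      rw [hPp _ hx₀p] at h1
      rw [h1] at hx₀r
      simp at hx₀r
      linarith
    exact ⟨m x₀, hmN x₀ hx₀Xt⟩
  have hbddJ : BddBelow (J '' NN) := ⟨0, by rintro y ⟨u, hu, rfl⟩; exact (hJposN u hu).le⟩
  have hc₀leJ : ∀ u ∈ NN, c₀ ≤ J u := fun u hu => csInf_le hbddJ ⟨u, hu, rfl⟩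
  -- continuity of m
  have hmcont : ∀ (v : ℕ → X) (u₀ : X), (∀ k, v k ∉ Xt) → u₀ ∉ Xt →
      Tendsto v atTop (𝓝 u₀) → Tendsto (fun k => m (v k)) atTop (𝓝 (m u₀)) := by
    intro v u₀ hvXt hu₀Xt hv
    have hPu₀ : P u₀ ≠ 0 := fun h => hu₀Xt ((hmemXt u₀).mpr h)
    have hPu₀n : 0 < ‖P u₀‖ := norm_pos_iff.mpr hPu₀
    have hK : IsCompact (insert u₀ (Set.range v)) := hv.isCompact_insert_range
    have hKX : ∀ x ∈ insert u₀ (Set.range v), x ∉ Xt := by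
      rintro x (rfl | ⟨k, rfl⟩)
      exacts [hu₀Xt, hvXt k]
    obtain ⟨R, hR⟩ := isBounded_iff_forall_norm_le.mp (hm_bdd _ hK hKX)
    have hRv : ∀ k, ‖m (v k)‖ ≤ R := fun k => hR _ ⟨v k, Set.mem_insert_of_mem _ ⟨k, rfl⟩, rfl⟩
    have hRu : ‖m u₀‖ ≤ R := hR _ ⟨u₀, Set.mem_insert _ _, rfl⟩
    refine tendsto_of_subseq_tendsto ?_
    intro ns hns
    have hPv : Tendsto (fun k => ‖P (v (ns k))‖) atTop (𝓝 ‖P u₀‖) :=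
      ((continuous_norm.comp P.continuous).tendsto u₀).comp (hv.comp hns)
    have hev : ∀ᶠ k in atTop, ‖P u₀‖ / 2 ≤ ‖P (v (ns k))‖ :=
      hPv.eventually (eventually_ge_nhds (by linarith))
    obtain ⟨N, hN⟩ := eventually_atTop.mp hev
    set ns1 : ℕ → ℕ := fun k => ns (k + N) with hns1def
    have hns1 : Tendsto ns1 atTop atTop := hns.comp (tendsto_add_atTop_nat N)
    choose sf hs0 yf hyf hwf using fun k => hm_mem (v (ns1 k)) (hvXt (ns1 k))
    have hPw : ∀ k, P (m (v (ns1 k))) = sf k • P (v (ns1 k)) := by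
      intro k
      rw [hwf k, map_add, map_smul, (hmemXt _).mp (hyf k), add_zero]
    have hsb : ∀ k, sf k ≤ R / (‖P u₀‖ / 2) := by
      intro k
      have h1 : sf k * ‖P (v (ns1 k))‖ = ‖P (m (v (ns1 k)))‖ := by
        rw [hPw k, norm_smul, Real.norm_eq_abs, abs_of_nonneg (hs0 k)]
      have h2 : ‖P (m (v (ns1 k)))‖ ≤ R := le_trans (hPle _) (hRv _)
      have h3 : ‖P u₀‖ / 2 ≤ ‖P (v (ns1 k))‖ := hN (k + N) (by omega)
      rw [le_div_iff₀ (by linarith)]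
      calc sf k * (‖P u₀‖ / 2) ≤ sf k * ‖P (v (ns1 k))‖ :=
            mul_le_mul_of_nonneg_left h3 (hs0 k)
        _ ≤ R := by rw [h1]; exact h2
    have hIcc : ∀ k, sf k ∈ Set.Icc (0:ℝ) (R / (‖P u₀‖ / 2)) := fun k => ⟨hs0 k, hsb k⟩
    obtain ⟨t₀, ht₀mem, ms, hmsmono, hms⟩ := (isCompact_Icc).tendsto_subseq hIcc
    obtain ⟨ms2, x₁, hms2mono, hweak⟩ := my_wsc hrefl (fun j => m (v (ns1 (ms j)))) R
      (fun j => hRv _)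
    set idx : ℕ → ℕ := fun i => ms (ms2 i) with hidxdef
    have hsc : Tendsto (fun i => sf (idx i)) atTop (𝓝 t₀) := hms.comp hms2mono.tendsto_atTop
    have hidxT : Tendsto (fun i => ns1 (idx i)) atTop atTop :=
      hns1.comp ((hmsmono.comp hms2mono).tendsto_atTop)
    have hvc : Tendsto (fun i => v (ns1 (idx i))) atTop (𝓝 u₀) := hv.comp hidxT
    set W : ℕ → X := fun i => m (v (ns1 (idx i))) with hWdef
    have hWweak : ∀ ψ : X →L[ℝ] ℝ, Tendsto (fun i => ψ (W i)) atTop (𝓝 (ψ x₁)) :=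
      fun ψ => hweak ψ
    have hPWlim : Tendsto (fun i => P (W i)) atTop (𝓝 (t₀ • P u₀)) := by
      have heq : (fun i => P (W i)) = fun i => sf (idx i) • P (v (ns1 (idx i))) :=
        funext fun i => hPw (idx i)
      rw [heq]
      exact hsc.smul ((P.continuous.tendsto u₀).comp hvc)
    have hPx₁ : P x₁ = t₀ • P u₀ := by
      have h1 : ∀ ψ : X →L[ℝ] ℝ, ψ (P x₁) = ψ (t₀ • P u₀) := by
        intro ψ
        have ha' : Tendsto (fun i => ψ (P (W i))) atTop (𝓝 (ψ (P x₁))) := by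
          have := hWweak (ψ.comp P)
          simpa using this
        have hb' : Tendsto (fun i => ψ (P (W i))) atTop (𝓝 (ψ (t₀ • P u₀))) :=
          (ψ.continuous.tendsto _).comp hPWlim
        exact tendsto_nhds_unique ha' hb'
      exact (NormedSpace.eq_iff_forall_dual_eq ℝ).mpr h1
    have hT1 : Tendsto (fun i => P (W i)) atTop (𝓝 (P x₁)) := by rw [hPx₁]; exact hPWlim
    have hT2 : ∀ ψ : X →L[ℝ] ℝ, Tendsto (fun i => ψ (W i - P (W i))) atTop
        (𝓝 (ψ (x₁ - P x₁))) := by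
      intro ψ
      have := (hWweak ψ).sub ((ψ.continuous.tendsto _).comp hT1)
      simpa [map_sub] using this
    have ht₀0 : 0 ≤ t₀ := ht₀mem.1
    have hx₁mem : ∃ t : ℝ, 0 ≤ t ∧ ∃ y ∈ Xt, x₁ = t • u₀ + y := by
      refine ⟨t₀, ht₀0, x₁ - t₀ • u₀, ?_, by abel⟩
      rw [hmemXt, map_sub, map_smul, hPx₁, sub_self]
    obtain ⟨s₀, hs₀0, y₀, hy₀, hmu₀⟩ := hm_mem u₀ hu₀Xt
    have hζ : Tendsto (fun i => J (s₀ • v (ns1 (idx i)) + y₀)) atTop (𝓝 (J (m u₀))) := by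
      have h1 : Tendsto (fun i => s₀ • v (ns1 (idx i)) + y₀) atTop (𝓝 (s₀ • u₀ + y₀)) :=
        (tendsto_const_nhds.smul hvc).add tendsto_const_nhds
      rw [← hmu₀] at h1
      exact (hJcont.tendsto _).comp h1
    have hζle : ∀ i, J (s₀ • v (ns1 (idx i)) + y₀) ≤ J (W i) :=
      fun i => hmmax _ (hvXt _) _ ⟨s₀, hs₀0, y₀, hy₀, rfl⟩
    have hQlim : Tendsto (fun i => (1/2) * ‖P (W i)‖^2) atTop
        (𝓝 ((1/2) * ‖P x₁‖^2)) := by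
      have := ((continuous_norm.tendsto (P x₁)).comp hT1).pow 2
      exact this.const_mul _
    have hJx₁le : J x₁ ≤ J (m u₀) := hmmax u₀ hu₀Xt x₁ hx₁mem
    have hA2app := hA2 W x₁ hT1 hT2
    have hJgelim : J (m u₀) ≤ J x₁ := by
      by_contra hcon
      push_neg at hcon
      set ε' := (J (m u₀) - J x₁) / 3 with hε'def
      have hε'pos : 0 < ε' := by rw [hε'def]; linarith
      have hb1 : ∀ᶠ i in atTop, (1/2) * ‖P (W i)‖^2 - J (s₀ • v (ns1 (idx i)) + y₀) <
          (1/2) * ‖P x₁‖^2 - J (m u₀) + ε' :=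
        (hQlim.sub hζ).eventually (eventually_lt_nhds (by linarith))
      have hb2 : ∀ᶠ i in atTop, I x₁ - ε' < I (W i) := hA2app _ (by linarith)
      obtain ⟨i, hi1, hi2⟩ := (hb1.and hb2).exists
      have hIW : I (W i) = (1/2) * ‖P (W i)‖^2 - J (W i) := by rw [hJI (W i)]; ring
      have hIx : I x₁ = (1/2) * ‖P x₁‖^2 - J x₁ := by rw [hJI x₁]; ring
      have := hζle i
      rw [hIW] at hi2
      rw [hIx] at hi2
      rw [hε'def] at hi1 hi2
      linarith
    have hJeq : J x₁ = J (m u₀) := le_antisymm hJx₁le hJgelim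
    have hx₁m : x₁ = m u₀ := by
      by_contra hne
      exact absurd hJeq (ne_of_lt (hm_max u₀ hu₀Xt x₁ hx₁mem hne))
    have hIWlim : Tendsto (fun i => I (W i)) atTop (𝓝 (I x₁)) := by
      rw [tendsto_order]
      constructor
      · intro b hb
        exact hA2app b hb
      · intro b hb
        have hup : Tendsto (fun i => (1/2) * ‖P (W i)‖^2 -
            J (s₀ • v (ns1 (idx i)) + y₀)) atTop
            (𝓝 ((1/2) * ‖P x₁‖^2 - J (m u₀))) := hQlim.sub hζ
        have heq2 : (1/2) * ‖P x₁‖^2 - J (m u₀) = I x₁ := by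
          rw [← hJeq, hJI x₁]; ring
        rw [heq2] at hup
        filter_upwards [hup.eventually (eventually_lt_nhds hb)] with i hi
        have hIW : I (W i) = (1/2) * ‖P (W i)‖^2 - J (W i) := by rw [hJI (W i)]; ring
        rw [hIW]
        linarith [hζle i]
    have hfin := hA3 W x₁ hT1 hT2 hIWlim
    rw [hx₁m] at hfin
    exact ⟨fun i => idx i + N, hfin⟩
  -- the sphere and infimum identification
  set Sset : Set X := {x : X | x ∈ Xp ∧ ‖x‖ = r} with hSsetdef
  have hSXt : ∀ x ∈ Sset, x ∉ Xt := by
    rintro x ⟨hxp, hxr⟩ hmem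
    have h1 := (hmemXt _).mp hmem
    rw [hPp _ hxp] at h1
    rw [h1] at hxr
    simp at hxr
    linarith
  have hSclosed : IsClosed Sset := by
    have : Sset = (Xp : Set X) ∩ {x : X | ‖x‖ = r} := by
      ext x; simp [hSsetdef, Set.mem_setOf_eq, Set.mem_inter_iff]
    rw [this]
    exact hXpcl.inter (isClosed_eq continuous_norm continuous_const)
  have himg : (fun x => J (m x)) '' Sset = J '' NN := by
    apply Set.Subset.antisymm
    · rintro _ ⟨x, hx, rfl⟩
      exact ⟨m x, hmN x (hSXt x hx), rfl⟩
    · rintro _ ⟨u, hu, rfl⟩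
      have huXt : u ∉ Xt := hu.1
      have hPu0 : P u ≠ 0 := fun h => huXt ((hmemXt u).mpr h)
      have hPun : 0 < ‖P u‖ := norm_pos_iff.mpr hPu0
      set wpt : X := (r / ‖P u‖) • P u with hwptdef
      have hwptp : wpt ∈ Xp := Xp.smul_mem _ (hPm u)
      have hwptr : ‖wpt‖ = r := by
        rw [hwptdef, norm_smul, Real.norm_eq_abs, abs_of_pos (by positivity)]
        field_simp
      have hwptXt : wpt ∉ Xt := hSXt wpt ⟨hwptp, hwptr⟩
      have hmw : m wpt = u := by
        refine (hm_unique wpt hwptXt u ⟨‖P u‖ / r, by positivity, u - P u, hQm u, ?_⟩ ?_ ?_).symm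
        · rw [hwptdef, smul_smul]
          rw [div_mul_div_comm, mul_comm, ← div_mul_div_comm]
          rw [div_self (ne_of_gt hr), div_self (ne_of_gt hPun)]
          simp
        · intro h
          rw [h] at huXt
          exact huXt Xt.zero_mem
        · rintro z ⟨t, y, hy, rfl⟩
          have hz : t • wpt + y = (t * (r / ‖P u‖)) • u +
              (y - (t * (r / ‖P u‖)) • (u - P u)) := by
            rw [hwptdef]
            module
          rw [hz, map_add, map_smul]
          have h2 : y - (t * (r / ‖P u‖)) • (u - P u) ∈ Xt :=
            Xt.sub_mem hy (Xt.smul_mem _ (hQm u))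
          rw [hu.2.1, hu.2.2 _ h2]
          simp
      refine ⟨wpt, ⟨hwptp, hwptr⟩, ?_⟩
      show J (m wpt) = J u
      rw [hmw]
  -- PS sequence construction via Ekeland
  have hεn : Tendsto (fun n : ℕ => ((n:ℝ)+1)⁻¹) atTop (𝓝 0) := by
    simpa [one_div] using tendsto_one_div_add_atTop_nhds_zero_nat (𝕜 := ℝ)
  have hPSseq : ∃ u : ℕ → X, (∀ n, u n ∈ NN) ∧
      Tendsto (fun n => J (u n)) atTop (𝓝 c₀) ∧
      Tendsto (fun n => ‖J' (u n)‖) atTop (𝓝 0) := by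
    have hΨc : ∀ (u : ℕ → X) (x : X), (∀ k, u k ∈ Sset) → x ∈ Sset →
        Tendsto u atTop (𝓝 x) → Tendsto (fun k => J (m (u k))) atTop (𝓝 (J (m x))) := by
      intro u x hu hx hux
      exact (hJcont.tendsto _).comp (hmcont u x (fun k => hSXt _ (hu k)) (hSXt _ hx) hux)
    have hΨlb : ∀ x ∈ Sset, (0:ℝ) ≤ J (m x) := fun x hx => (hJposN _ (hmN x (hSXt x hx))).le
    have hinf : sInf ((fun x => J (m x)) '' Sset) = c₀ := by rw [himg, hc₀def]
    have hEk : ∀ n : ℕ, ∃ w ∈ Sset, J (m w) < c₀ + ((n:ℝ)+1)⁻¹ ∧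
        ∀ w' ∈ Sset, J (m w) ≤ J (m w') + ((n:ℝ)+1)⁻¹ * ‖w' - w‖ := by
      intro n
      have hεpos : (0:ℝ) < ((n:ℝ)+1)⁻¹ := by positivity
      obtain ⟨y, ⟨p, hp, rfl⟩, hylt⟩ := Real.lt_sInf_add_pos
        (hSne.image (fun x => J (m x))) hεpos
      rw [hinf] at hylt
      obtain ⟨w, hwS, hwle, hwvar⟩ := my_ekeland (f := fun x => J (m x))
        hSclosed hΨc hΨlb hp hεpos
      exact ⟨w, hwS, lt_of_le_of_lt hwle hylt, hwvar⟩
    choose wE hwES hwElt hwEvar using hEk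
    have hgrad : ∀ n, ‖J' (m (wE n))‖ ≤ (4 * r / δ) * ((n:ℝ)+1)⁻¹ := by
      intro n
      set ε : ℝ := ((n:ℝ)+1)⁻¹ with hεdef
      have hεpos : 0 < ε := by rw [hεdef]; positivity
      set w : X := wE n with hwdef
      have hwS : w ∈ Sset := hwES n
      have hwXp : w ∈ Xp := hwS.1
      have hwr : ‖w‖ = r := hwS.2
      have hwXt : w ∉ Xt := hSXt _ hwS
      have hPww : P w = w := hPp _ hwXp
      obtain ⟨s₀, hs₀0, y₀, hy₀, hmu⟩ := hm_mem w hwXt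
      have hPu : P (m w) = s₀ • w := by
        rw [hmu, map_add, map_smul, (hmemXt _).mp hy₀, add_zero, hPww]
      have hs₀r : s₀ * r = ‖P (m w)‖ := by
        rw [hPu, norm_smul, Real.norm_eq_abs, abs_of_nonneg hs₀0, hwr]
      have hs₀lb : δ / r ≤ s₀ := by
        have h1 : δ ≤ ‖P (m w)‖ := hm_lb w hwXt
        rw [← hs₀r] at h1
        rw [div_le_iff₀ hr]
        linarith
      have hs₀pos : 0 < s₀ := lt_of_lt_of_le (by positivity) hs₀lb
      have hkey : ∀ z : X, -((4 * r / δ) * ε * ‖z‖) ≤ J' (m w) z := by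
        intro z
        set t : ℕ → ℝ := fun i => r / (2 * (‖z‖ + 1) * ((i:ℝ) + 1)) with htdef
        have htpos : ∀ i, 0 < t i := by
          intro i
          show 0 < r / (2 * (‖z‖ + 1) * ((i:ℝ) + 1))
          positivity
        have htz : ∀ i, t i * ‖z‖ ≤ r / 2 := by
          intro i
          have h1 : (0:ℝ) ≤ (i:ℝ) := Nat.cast_nonneg i
          have hden : (0:ℝ) < 2 * (‖z‖ + 1) * ((i:ℝ) + 1) := by positivity
          show r / (2 * (‖z‖ + 1) * ((i:ℝ) + 1)) * ‖z‖ ≤ r / 2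
          rw [div_mul_eq_mul_div, div_le_div_iff₀ hden (by norm_num)]
          nlinarith [norm_nonneg z, hr.le,
            mul_nonneg (mul_nonneg hr.le (by positivity : (0:ℝ) ≤ ‖z‖ + 1)) h1]
        have htlim : Tendsto t atTop (𝓝 0) := by
          have heq : t = fun i : ℕ => (r / (2 * (‖z‖ + 1))) * ((i:ℝ)+1)⁻¹ := by
            funext i
            show r / (2 * (‖z‖ + 1) * ((i:ℝ) + 1)) = (r / (2 * (‖z‖ + 1))) * ((i:ℝ)+1)⁻¹
            rw [← div_div, div_eq_mul_inv]
          rw [heq]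
          simpa using hεn.const_mul (r / (2 * (‖z‖ + 1)))
        set x' : ℕ → X := fun i => w + t i • P z with hx'def
        have hx'Xp : ∀ i, x' i ∈ Xp := fun i => Xp.add_mem hwXp (Xp.smul_mem _ (hPm z))
        have hnPz : ∀ i, ‖t i • P z‖ ≤ r / 2 := by
          intro i
          rw [norm_smul, Real.norm_eq_abs, abs_of_pos (htpos i)]
          calc t i * ‖P z‖ ≤ t i * ‖z‖ := mul_le_mul_of_nonneg_left (hPle z) (htpos i).le
            _ ≤ r / 2 := htz i
        have hx'lb : ∀ i, r / 2 ≤ ‖x' i‖ := by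
          intro i
          have h3 : ‖w‖ ≤ ‖x' i‖ + ‖t i • P z‖ := by
            calc ‖w‖ = ‖x' i - t i • P z‖ := by
                  show ‖w‖ = ‖(w + t i • P z) - t i • P z‖
                  rw [add_sub_cancel_right]
              _ ≤ ‖x' i‖ + ‖t i • P z‖ := norm_sub_le _ _
          rw [hwr] at h3
          linarith [hnPz i]
        have hx'pos : ∀ i, 0 < ‖x' i‖ := fun i => lt_of_lt_of_le (by positivity) (hx'lb i)
        set ω : ℕ → X := fun i => (r / ‖x' i‖) • x' i with hωdef
        have hωS : ∀ i, ω i ∈ Sset := by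
          intro i
          refine ⟨Xp.smul_mem _ (hx'Xp i), ?_⟩
          show ‖(r / ‖x' i‖) • x' i‖ = r
          rw [norm_smul, Real.norm_eq_abs, abs_of_pos (div_pos hr (hx'pos i)),
            div_mul_cancel₀ _ (ne_of_gt (hx'pos i))]
        have hωdist : ∀ i, ‖ω i - w‖ ≤ 4 * (t i * ‖z‖) := by
          intro i
          have hxn := hx'pos i
          have hxlb := hx'lb i
          have h0 : ‖x' i - w‖ = t i * ‖P z‖ := by
            rw [hx'def]
            simp only [add_sub_cancel_left]
            rw [norm_smul, Real.norm_eq_abs, abs_of_pos (htpos i)]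
          have hPzz : ‖P z‖ ≤ ‖z‖ := hPle z
          have hdecomp : ω i - w = (r / ‖x' i‖) • (x' i - w) + ((r / ‖x' i‖) - 1) • w := by
            rw [hωdef]
            module
          rw [hdecomp]
          have hA := norm_add_le ((r / ‖x' i‖) • (x' i - w)) (((r / ‖x' i‖) - 1) • w)
          rw [norm_smul, norm_smul] at hA
          have hfrac : r / ‖x' i‖ ≤ 2 := by
            rw [div_le_iff₀ hxn]
            linarith
          have hfrac0 : (0:ℝ) < r / ‖x' i‖ := by positivity
          have habs1 : ‖(r / ‖x' i‖ : ℝ)‖ = r / ‖x' i‖ := Real.norm_of_nonneg hfrac0.le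
          have hdiff : |r - ‖x' i‖| ≤ t i * ‖P z‖ := by
            have h5 := abs_norm_sub_norm_le w (x' i)
            rw [hwr] at h5
            have h6 : ‖w - x' i‖ = t i * ‖P z‖ := by rw [norm_sub_rev]; exact h0
            rw [h6] at h5
            exact h5
          have habs2 : ‖(r / ‖x' i‖ - 1 : ℝ)‖ * ‖w‖ ≤ 2 * (t i * ‖P z‖) := by
            rw [hwr, Real.norm_eq_abs]
            have h7 : r / ‖x' i‖ - 1 = (r - ‖x' i‖) / ‖x' i‖ := by field_simp
            rw [h7, abs_div, abs_of_pos hxn, div_mul_eq_mul_div, div_le_iff₀ hxn]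
            nlinarith [hdiff, hxlb, abs_nonneg (r - ‖x' i‖),
              mul_nonneg (htpos i).le (norm_nonneg (P z))]
          have habs3 : ‖(r / ‖x' i‖ : ℝ)‖ * ‖x' i - w‖ ≤ 2 * (t i * ‖P z‖) := by
            rw [habs1, h0]
            have := mul_le_mul_of_nonneg_right hfrac
              (mul_nonneg (htpos i).le (norm_nonneg (P z)))
            linarith
          have hfin : ‖(r / ‖x' i‖) • (x' i - w) + ((r / ‖x' i‖) - 1) • w‖ ≤
              4 * (t i * ‖P z‖) := by linarith
          calc ‖(r / ‖x' i‖) • (x' i - w) + ((r / ‖x' i‖) - 1) • w‖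
              ≤ 4 * (t i * ‖P z‖) := hfin
            _ ≤ 4 * (t i * ‖z‖) := by
                have := mul_le_mul_of_nonneg_left hPzz (htpos i).le
                linarith
        have hωlim : Tendsto ω atTop (𝓝 w) := by
          have h1 : Tendsto (fun i => 4 * (t i * ‖z‖)) atTop (𝓝 0) := by
            have := (htlim.mul_const ‖z‖).const_mul (4:ℝ)
            simpa using this
          have h2 : Tendsto (fun i => ‖ω i - w‖) atTop (𝓝 0) :=
            squeeze_zero (fun i => norm_nonneg _) hωdist h1
          rw [tendsto_iff_norm_sub_tendsto_zero]
          exact h2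
        have hulim : Tendsto (fun i => m (ω i)) atTop (𝓝 (m w)) :=
          hmcont ω w (fun i => hSXt _ (hωS i)) hwXt hωlim
        choose σ hσ0 yv hyv hmω using fun i => hm_mem (ω i) (hSXt _ (hωS i))
        set c : ℕ → ℝ := fun i => σ i * (r / ‖x' i‖) with hcdef
        have hc0 : ∀ i, 0 ≤ c i := fun i => mul_nonneg (hσ0 i) (by positivity)
        have hmc : ∀ i, m (ω i) = c i • x' i + yv i := by
          intro i
          rw [hmω i]
          show σ i • ((r / ‖x' i‖) • x' i) + yv i = (σ i * (r / ‖x' i‖)) • x' i + yv i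
          rw [smul_smul]
        have hPmω : ∀ i, P (m (ω i)) = c i • x' i := by
          intro i
          rw [hmc i, map_add, map_smul, (hmemXt _).mp (hyv i), add_zero, hPp _ (hx'Xp i)]
        have hceq : ∀ i, c i = ‖P (m (ω i))‖ / ‖x' i‖ := by
          intro i
          rw [hPmω i, norm_smul, Real.norm_eq_abs, abs_of_nonneg (hc0 i),
            mul_div_assoc, div_self (ne_of_gt (hx'pos i)), mul_one]
        have hx'lim : Tendsto (fun i => ‖x' i‖) atTop (𝓝 r) := by
          have h1 : Tendsto x' atTop (𝓝 (w + (0:ℝ) • P z)) :=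
            tendsto_const_nhds.add (htlim.smul tendsto_const_nhds)
          rw [zero_smul, add_zero] at h1
          have h2 := (continuous_norm.tendsto w).comp h1
          rw [hwr] at h2
          exact h2
        have hclim : Tendsto c atTop (𝓝 s₀) := by
          have h1 : Tendsto (fun i => ‖P (m (ω i))‖) atTop (𝓝 ‖P (m w)‖) :=
            (continuous_norm.tendsto _).comp ((P.continuous.tendsto _).comp hulim)
          have h2 := h1.div hx'lim (ne_of_gt hr)
          have h3 : ‖P (m w)‖ / r = s₀ := by
            rw [← hs₀r]
            field_simp
          rw [h3] at h2
          have h4 : c = fun i => ‖P (m (ω i))‖ / ‖x' i‖ := funext hceq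
          rw [h4]
          exact h2
        have hEke : ∀ i, J (m w) ≤ J (m (ω i)) + ε * (4 * (t i * ‖z‖)) := by
          intro i
          have h1 := hwEvar n (ω i) (hωS i)
          have h2 : ε * ‖ω i - w‖ ≤ ε * (4 * (t i * ‖z‖)) :=
            mul_le_mul_of_nonneg_left (hωdist i) hεpos.le
          calc J (m w) ≤ J (m (ω i)) + ε * ‖ω i - w‖ := h1
            _ ≤ J (m (ω i)) + ε * (4 * (t i * ‖z‖)) := by linarith
        have hηle : ∀ i, J (m (ω i) - (t i * c i) • z) ≤ J (m w) := by
          intro i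
          refine hmmax w hwXt _ ⟨c i, hc0 i, yv i - (t i * c i) • (z - P z),
            Xt.sub_mem (hyv i) (Xt.smul_mem _ (hQm z)), ?_⟩
          rw [hmc i, hx'def]
          module
        have hηlim : Tendsto (fun i => m (ω i) - (t i * c i) • z) atTop (𝓝 (m w)) := by
          have h1 : Tendsto (fun i => t i * c i) atTop (𝓝 0) := by
            have := htlim.mul hclim
            simpa using this
          have h2 : Tendsto (fun i => (t i * c i) • z) atTop (𝓝 ((0:ℝ) • z)) :=
            h1.smul tendsto_const_nhds
          rw [zero_smul] at h2
          have := hulim.sub h2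
          simpa using this
        have hmain : ∀ ρ : ℝ, 0 < ρ →
            0 ≤ s₀ * (J' (m w) z) + ρ * (s₀ * ‖z‖) + 4 * ε * ‖z‖ := by
          intro ρ hρ
          obtain ⟨d, hd, hball⟩ := Metric.continuousAt_iff.mp
            (hJ'c.continuousAt (x := m w)) ρ hρ
          have hev1 : ∀ᶠ i in atTop, m (ω i) ∈ Metric.ball (m w) d :=
            hulim (Metric.ball_mem_nhds _ hd)
          have hev2 : ∀ᶠ i in atTop, (m (ω i) - (t i * c i) • z) ∈ Metric.ball (m w) d :=
            hηlim (Metric.ball_mem_nhds _ hd)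
          have hevineq : ∀ᶠ i in atTop,
              0 ≤ c i * (J' (m w) z) + ρ * (c i * ‖z‖) + 4 * ε * ‖z‖ := by
            filter_upwards [hev1, hev2] with i h1 h2
            have hmvt := Convex.norm_image_sub_le_of_norm_hasFDerivWithin_le'
              (f := J) (f' := J') (φ := J' (m w)) (s := Metric.ball (m w) d) (C := ρ)
              (fun x _ => (hJd x).hasFDerivWithinAt)
              (fun x hx => by
                have h3 := hball (show dist x (m w) < d from hx)
                rw [dist_eq_norm] at h3
                exact h3.le)
              (convex_ball _ d) h2 h1
            have hdiffeq : m (ω i) - (m (ω i) - (t i * c i) • z) = (t i * c i) • z := by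
              abel
            rw [hdiffeq] at hmvt
            have hJub : J (m (ω i)) - J (m (ω i) - (t i * c i) • z) ≤
                J' (m w) ((t i * c i) • z) + ρ * ‖(t i * c i) • z‖ := by
              rw [Real.norm_eq_abs] at hmvt
              have := (abs_le.mp hmvt).2
              linarith
            have hcomb : 0 ≤ J' (m w) ((t i * c i) • z) + ρ * ‖(t i * c i) • z‖ +
                ε * (4 * (t i * ‖z‖)) := by
              have he := hEke i
              have hl := hηle i
              linarith
            rw [map_smul, smul_eq_mul, norm_smul, Real.norm_eq_abs,
              abs_of_nonneg (mul_nonneg (htpos i).le (hc0 i))] at hcomb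
            have hfact : (t i * c i) * (J' (m w) z) + ρ * ((t i * c i) * ‖z‖) +
                ε * (4 * (t i * ‖z‖)) =
                t i * (c i * (J' (m w) z) + ρ * (c i * ‖z‖) + 4 * ε * ‖z‖) := by ring
            rw [hfact] at hcomb
            by_contra hB
            push_neg at hB
            have := mul_neg_of_pos_of_neg (htpos i) hB
            linarith
          have hlim2 : Tendsto (fun i => c i * (J' (m w) z) + ρ * (c i * ‖z‖) + 4 * ε * ‖z‖)
              atTop (𝓝 (s₀ * (J' (m w) z) + ρ * (s₀ * ‖z‖) + 4 * ε * ‖z‖)) :=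
            (((hclim.mul_const _)).add (((hclim.mul_const _)).const_mul ρ)).add
              tendsto_const_nhds
          exact ge_of_tendsto hlim2 hevineq
        have h0 : 0 ≤ s₀ * (J' (m w) z) + 4 * ε * ‖z‖ := by
          by_contra hneg
          push_neg at hneg
          set A := -(s₀ * (J' (m w) z) + 4 * ε * ‖z‖) with hAdef
          have hApos : 0 < A := by rw [hAdef]; linarith
          have hm2 := hmain (A / (2 * (s₀ * ‖z‖ + 1))) (by positivity)
          have hf : (A / (2 * (s₀ * ‖z‖ + 1))) * (s₀ * ‖z‖) ≤ A / 2 := by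
            rw [div_mul_eq_mul_div, div_le_div_iff₀ (by positivity) (by norm_num)]
            nlinarith [mul_nonneg hs₀0 (norm_nonneg z), hApos]
          rw [hAdef] at hf
          linarith
        have hgoal2 : -(4 * r * ε * ‖z‖) ≤ δ * (J' (m w) z) := by
          have hrs : δ ≤ s₀ * r := by
            rw [div_le_iff₀ hr] at hs₀lb
            linarith
          rcases le_or_gt 0 (J' (m w) z) with hJz | hJz
          · have : 0 ≤ δ * (J' (m w) z) := mul_nonneg hδ.le hJz
            nlinarith [mul_nonneg (mul_nonneg (by linarith [hr] : (0:ℝ) ≤ 4*r) hεpos.le)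
              (norm_nonneg z)]
          · have h1 : r * (s₀ * (J' (m w) z) + 4 * ε * ‖z‖) ≥ 0 :=
              mul_nonneg hr.le h0
            have h2 : δ * (J' (m w) z) ≥ (s₀ * r) * (J' (m w) z) := by
              have := mul_le_mul_of_nonpos_right hrs hJz.le
              linarith
            nlinarith
        have hfinal : -((4 * r / δ) * ε * ‖z‖) = -(4 * r * ε * ‖z‖) / δ := by
          rw [div_mul_eq_mul_div, div_mul_eq_mul_div, neg_div]
        rw [hfinal, div_le_iff₀ hδ]
        linarith only [hgoal2, mul_comm (J' (m w) z) δ]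
      refine ContinuousLinearMap.opNorm_le_bound _
        (mul_nonneg (by positivity) hεpos.le) ?_
      intro z
      have h1 := hkey z
      have h2 := hkey (-z)
      rw [map_neg, norm_neg] at h2
      rw [Real.norm_eq_abs, abs_le]
      constructor <;> linarith only [h1, h2]
    refine ⟨fun n => m (wE n), fun n => hmN _ (hSXt _ (hwES n)), ?_, ?_⟩
    · have hlow : ∀ n, c₀ ≤ J (m (wE n)) := fun n => hc₀leJ _ (hmN _ (hSXt _ (hwES n)))
      have hup : ∀ n, J (m (wE n)) ≤ c₀ + ((n:ℝ)+1)⁻¹ := fun n => (hwElt n).le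
      refine tendsto_of_tendsto_of_tendsto_of_le_of_le' (f := fun n : ℕ => J (m (wE n))) (g := fun _ : ℕ => c₀)
        (h := fun n => c₀ + ((n:ℝ)+1)⁻¹) tendsto_const_nhds ?_
        (Eventually.of_forall hlow) (Eventually.of_forall hup)
      simpa using tendsto_const_nhds.add hεn
    · have h0 : ∀ n, (0:ℝ) ≤ ‖J' (m (wE n))‖ := fun n => norm_nonneg _
      refine tendsto_of_tendsto_of_tendsto_of_le_of_le' (f := fun n : ℕ => ‖J' (m (wE n))‖) (g := fun _ : ℕ => (0:ℝ))
        (h := fun n => (4 * r / δ) * ((n:ℝ)+1)⁻¹) tendsto_const_nhds ?_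
        (Eventually.of_forall h0) (Eventually.of_forall hgrad)
      simpa using hεn.const_mul ((4:ℝ) * r / δ)
  obtain ⟨uS, huSN, huSJ, huSd⟩ := hPSseq
  obtain ⟨φ, v, hφ, hT1, hT2⟩ := hPS uS (fun n => huSN n) huSJ huSd
  set q : ℕ → X := fun i => uS (φ i) with hqdef
  have hqN : ∀ i, q i ∈ NN := fun i => huSN (φ i)
  have hqJ : Tendsto (fun i => J (q i)) atTop (𝓝 c₀) := huSJ.comp hφ.tendsto_atTop
  have hqd : Tendsto (fun i => ‖J' (q i)‖) atTop (𝓝 0) := huSd.comp hφ.tendsto_atTop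
  have hT1' : Tendsto (fun i => P (q i)) atTop (𝓝 (P v)) := hT1
  have hT2' : ∀ ψ : X →L[ℝ] ℝ, Tendsto (fun i => ψ (q i - P (q i))) atTop
      (𝓝 (ψ (v - P v))) := hT2
  have hδv : δ ≤ ‖P v‖ := by
    have h1 : ∀ i, δ ≤ ‖P (q i)‖ := by
      intro i
      have := hm_lb (q i) (hqN i).1
      rwa [hNm _ (hqN i)] at this
    exact ge_of_tendsto ((continuous_norm.tendsto _).comp hT1') (Eventually.of_forall h1)
  have hvXt : v ∉ Xt := by
    intro hmem
    rw [(hmemXt v).mp hmem] at hδv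
    simp at hδv
    linarith
  have hζlim : Tendsto (fun i => J (P (q i) + (v - P v))) atTop (𝓝 (J v)) := by
    have h1 : Tendsto (fun i => P (q i) + (v - P v)) atTop (𝓝 (P v + (v - P v))) :=
      hT1'.add tendsto_const_nhds
    have h2 : P v + (v - P v) = v := by abel
    rw [h2] at h1
    exact (hJcont.tendsto _).comp h1
  have hζle : ∀ i, J (P (q i) + (v - P v)) ≤ J (q i) := by
    intro i
    have h := hmmax (q i) (hqN i).1 (P (q i) + (v - P v))
      ⟨1, zero_le_one, (v - P v) - (q i - P (q i)), Xt.sub_mem (hQm v) (hQm (q i)), by module⟩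
    rwa [hNm _ (hqN i)] at h
  have hJvle : J v ≤ c₀ := le_of_tendsto_of_tendsto' hζlim hqJ hζle
  have hIlim : Tendsto (fun i => I (q i)) atTop (𝓝 (I v)) := by
    have hQl : Tendsto (fun i => (1/2) * ‖P (q i)‖^2 - J (q i)) atTop
        (𝓝 ((1/2) * ‖P v‖^2 - c₀)) :=
      ((((continuous_norm.tendsto _).comp hT1').pow 2).const_mul _).sub hqJ
    have hIq : (fun i => I (q i)) = fun i => (1/2) * ‖P (q i)‖^2 - J (q i) := by
      funext i
      rw [hJI (q i)]
      ring
    have hL : (1/2) * ‖P v‖^2 - c₀ = I v := by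
      have hle1 : (1/2) * ‖P v‖^2 - c₀ ≤ I v := by
        have : I v = (1/2) * ‖P v‖^2 - J v := by rw [hJI v]; ring
        rw [this]
        linarith
      rcases eq_or_lt_of_le hle1 with h | h
      · exact h
      · exfalso
        have h2 := hA2 q v hT1' hT2'
        set b := ((1/2) * ‖P v‖^2 - c₀ + I v) / 2 with hbdef
        have hb1 : b < I v := by rw [hbdef]; linarith
        have hb2 : (1/2) * ‖P v‖^2 - c₀ < b := by rw [hbdef]; linarith
        have he1 := h2 b hb1
        have he2 : ∀ᶠ i in atTop, (1/2) * ‖P (q i)‖^2 - J (q i) < b :=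
          hQl.eventually (eventually_lt_nhds hb2)
        obtain ⟨i, hi1, hi2⟩ := (he1.and he2).exists
        have : I (q i) = (1/2) * ‖P (q i)‖^2 - J (q i) := by rw [hJI (q i)]; ring
        rw [this] at hi1
        linarith
    rw [hIq, ← hL]
    exact hQl
  have hqv : Tendsto q atTop (𝓝 v) := hA3 q v hT1' hT2' hIlim
  have hJ'v : J' v = 0 := by
    have h1 : Tendsto (fun i => ‖J' (q i)‖) atTop (𝓝 ‖J' v‖) :=
      (continuous_norm.tendsto _).comp ((hJ'c.tendsto v).comp hqv)
    have h2 : ‖J' v‖ = 0 := tendsto_nhds_unique h1 hqd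
    exact norm_eq_zero.mp h2
  have hJv : J v = c₀ := tendsto_nhds_unique ((hJcont.tendsto v).comp hqv) hqJ
  refine ⟨v, ⟨hvXt, ?_, ?_⟩, hJ'v, hJv⟩
  · rw [hJ'v]
    simp
  · intro w hw
    rw [hJ'v]
    simp
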